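/- Let f ∈ C[a,b], and let f_{n,N}^α satisfy the self-referential equation f_{n,N}^α(x) = α_i f_{n,N}^α(L_i⁻¹(x)) + S_{N,σ}(f, x) - α_i S_{n,σ}(f, L_i⁻¹(x)) on [x_{i-1}, x_i], with |α|∞ < 1. Then ‖f_{n,N}^α - f‖∞ ≤ (|α|∞/(1-|α|∞)) ω(f, (b-a)/n) + (1/(1-|α|∞)) ω(f, (b-a)/N). -/

import Mathlib

noncomputable def modulus (f : ℝ → ℝ) (a b δ : ℝ) : ℝ :=
  sSup {d : ℝ | ∃ u ∈ Set.Icc a b, ∃ v ∈ Set.Icc a b, |u - v| ≤ δ ∧ d = |f u - f v|}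

noncomputable def nnOp (m : ℝ) (ξ : ℝ → ℝ) (f : ℝ → ℝ) (a b : ℝ) (n : ℕ) (t : ℝ) : ℝ :=
  ∑ k ∈ Finset.range (n + 1),
    f (a + k * ((b - a) / n)) * ξ (2 * m / ((b - a) / n) * (t - (a + k * ((b - a) / n))))

lemma modulus_bddAbove (f : ℝ → ℝ) (a b δ : ℝ) (hf : ContinuousOn f (Set.Icc a b)) :
    BddAbove {d : ℝ | ∃ u ∈ Set.Icc a b, ∃ v ∈ Set.Icc a b, |u - v| ≤ δ ∧ d = |f u - f v|} := by
  obtain ⟨C, hC⟩ := (isCompact_Icc (a := a) (b := b)).exists_bound_of_continuousOn hf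
  refine ⟨2 * C, ?_⟩
  rintro d ⟨u, hu, v, hv, -, rfl⟩
  have h1 := hC u hu
  have h2 := hC v hv
  rw [Real.norm_eq_abs] at h1 h2
  have h3 : |f u - f v| ≤ |f u| + |f v| := by
    have := norm_sub_le (f u) (f v); simpa [Real.norm_eq_abs] using this
  linarith

lemma le_modulus (f : ℝ → ℝ) (a b δ : ℝ) (hf : ContinuousOn f (Set.Icc a b))
    {u v : ℝ} (hu : u ∈ Set.Icc a b) (hv : v ∈ Set.Icc a b) (huv : |u - v| ≤ δ) :
    |f u - f v| ≤ modulus f a b δ :=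
  le_csSup (modulus_bddAbove f a b δ hf) ⟨u, hu, v, hv, huv, rfl⟩

lemma modulus_nonneg (f : ℝ → ℝ) (a b δ : ℝ) (hf : ContinuousOn f (Set.Icc a b))
    (hab : a ≤ b) (hδ : 0 ≤ δ) : 0 ≤ modulus f a b δ := by
  have := le_modulus f a b δ hf (u := a) (v := a) (by simp [hab]) (by simp [hab]) (by simpa)
  simpa using this

/-- Interpolation error bound for the neural network operator. -/
lemma nnOp_err (m : ℝ) (hm : 0 < m) (σ : ℝ → ℝ) (hσ : Monotone σ)
    (hσ1 : ∀ x : ℝ, m ≤ x → σ x = 1) (hσ0 : ∀ x : ℝ, x ≤ -m → σ x = 0)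
    (ξ : ℝ → ℝ) (hξ : ∀ x : ℝ, ξ x = σ (x + m) - σ (x - m))
    (a b : ℝ) (hab : a < b) (f : ℝ → ℝ) (hf : ContinuousOn f (Set.Icc a b))
    (k : ℕ) (hk : 0 < k) (t : ℝ) (ht : t ∈ Set.Icc a b) :
    |f t - nnOp m ξ f a b k t| ≤ modulus f a b ((b - a) / k) := by
  set h : ℝ := (b - a) / (k : ℝ) with hh_def
  have hk0 : (0 : ℝ) < (k : ℝ) := by exact_mod_cast hk
  have hh : 0 < h := div_pos (by linarith) hk0
  have hkh : (k : ℝ) * h = b - a := by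
    rw [hh_def]; field_simp [hk0.ne']
  -- nonnegativity of ξ
  have hξ0 : ∀ y : ℝ, 0 ≤ ξ y := by
    intro y; rw [hξ]; have := hσ (show y - m ≤ y + m by linarith); linarith
  -- vanishing of ξ outside (-2m, 2m)
  have hξvan : ∀ y : ℝ, 2 * m ≤ |y| → ξ y = 0 := by
    intro y hy
    rcases le_abs.mp hy with h1 | h1
    · rw [hξ, hσ1 (y + m) (by linarith), hσ1 (y - m) (by linarith)]; ring
    · rw [hξ, hσ0 (y + m) (by linarith), hσ0 (y - m) (by linarith)]; ring
  -- partition of unity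
  set g : ℕ → ℝ := fun j => σ (2 * m / h * (t - (a + j * h)) + m) with hg_def
  have hterm : ∀ j : ℕ, ξ (2 * m / h * (t - (a + j * h))) = g j - g (j + 1) := by
    intro j
    have hg1 : g (j + 1) = σ (2 * m / h * (t - (a + ((j : ℝ) + 1) * h)) + m) := by
      simp only [hg_def, Nat.cast_add, Nat.cast_one]
    have hg0 : g j = σ (2 * m / h * (t - (a + (j : ℝ) * h)) + m) := rfl
    have harg : 2 * m / h * (t - (a + (j : ℝ) * h)) - m
        = 2 * m / h * (t - (a + ((j : ℝ) + 1) * h)) + m := by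
      field_simp
      ring
    rw [hξ, hg1, hg0, harg]
  have hsum : ∑ j ∈ Finset.range (k + 1), ξ (2 * m / h * (t - (a + j * h))) = 1 := by
    have := Finset.sum_range_sub' g (k + 1)
    calc ∑ j ∈ Finset.range (k + 1), ξ (2 * m / h * (t - (a + j * h)))
        = ∑ j ∈ Finset.range (k + 1), (g j - g (j + 1)) := by
          exact Finset.sum_congr rfl fun j _ => hterm j
      _ = g 0 - g (k + 1) := Finset.sum_range_sub' g (k + 1)
      _ = 1 := by
          have hg0 : g 0 = 1 := by
            apply hσ1
            have h1 : 0 ≤ t - a := by linarith [ht.1]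
            have h2 : 0 ≤ 2 * m / h := le_of_lt (div_pos (by linarith) hh)
            nlinarith [mul_nonneg h2 h1]
          have hgk : g (k + 1) = 0 := by
            apply hσ0
            have h1 : t - (a + ((k : ℝ) + 1) * h) ≤ -h := by
              have : ((k : ℝ) + 1) * h = (b - a) + h := by rw [add_mul, hkh]; ring
              rw [this]; linarith [ht.2]
            have h2 : 0 < 2 * m / h := div_pos (by linarith) hh
            have : 2 * m / h * (t - (a + ((k : ℝ) + 1) * h)) ≤ 2 * m / h * (-h) := by
              exact mul_le_mul_of_nonneg_left h1 (le_of_lt h2)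
            have h3 : 2 * m / h * (-h) = -(2 * m) := by field_simp
            push_cast
            nlinarith
          rw [hg0, hgk]; ring
  -- rewrite the error as a convex combination
  have hrw : f t - nnOp m ξ f a b k t
      = ∑ j ∈ Finset.range (k + 1), (f t - f (a + j * h)) * ξ (2 * m / h * (t - (a + j * h))) := by
    have hsplit : ∑ j ∈ Finset.range (k + 1),
          (f t - f (a + j * h)) * ξ (2 * m / h * (t - (a + j * h)))
        = f t * (∑ j ∈ Finset.range (k + 1), ξ (2 * m / h * (t - (a + j * h))))
          - ∑ j ∈ Finset.range (k + 1),
              f (a + j * h) * ξ (2 * m / h * (t - (a + j * h))) := by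
      rw [Finset.mul_sum, ← Finset.sum_sub_distrib]
      exact Finset.sum_congr rfl fun j _ => by ring
    rw [hsplit, hsum, mul_one, nnOp]
  rw [hrw]
  have hδ : ∀ j ∈ Finset.range (k + 1),
      |(f t - f (a + j * h)) * ξ (2 * m / h * (t - (a + j * h)))|
        ≤ modulus f a b h * ξ (2 * m / h * (t - (a + j * h))) := by
    intro j hj
    set y : ℝ := 2 * m / h * (t - (a + j * h)) with hy_def
    by_cases hz : ξ y = 0
    · rw [hz]; simp
    · have hjk : (j : ℝ) ≤ (k : ℝ) := by
        exact_mod_cast Nat.le_of_lt_succ (Finset.mem_range.mp hj)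
      have hnode : a + (j : ℝ) * h ∈ Set.Icc a b := by
        constructor
        · nlinarith [mul_nonneg (Nat.cast_nonneg j : (0:ℝ) ≤ j) hh.le]
        · nlinarith [mul_le_mul_of_nonneg_right hjk hh.le]
      have hclose : |t - (a + j * h)| ≤ h := by
        by_contra hc
        push_neg at hc
        apply hz
        apply hξvan
        rw [hy_def, abs_mul]
        have h2 : 0 < 2 * m / h := div_pos (by linarith) hh
        rw [abs_of_pos h2]
        have h3 : 2 * m / h * h = 2 * m := by field_simp
        nlinarith [mul_le_mul_of_nonneg_left hc.le h2.le]
      have := le_modulus f a b h hf ht hnode hclose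
      rw [abs_mul, abs_of_nonneg (hξ0 y)]
      exact mul_le_mul_of_nonneg_right this (hξ0 y)
  calc |∑ j ∈ Finset.range (k + 1), (f t - f (a + j * h)) * ξ (2 * m / h * (t - (a + j * h)))|
      ≤ ∑ j ∈ Finset.range (k + 1),
          |(f t - f (a + j * h)) * ξ (2 * m / h * (t - (a + j * h)))| :=
        Finset.abs_sum_le_sum_abs _ _
    _ ≤ ∑ j ∈ Finset.range (k + 1),
          modulus f a b h * ξ (2 * m / h * (t - (a + j * h))) := Finset.sum_le_sum hδ
    _ = modulus f a b h := by rw [← Finset.mul_sum, hsum, mul_one]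

/-- Error bound for the discrete neural network α-fractal function (the partition has
`N+1` subintervals of the uniform grid):
`‖f_{n,N}^α - f‖∞ ≤ (|α|∞/(1-|α|∞)) ω(f,(b-a)/n) + (1/(1-|α|∞)) ω(f,(b-a)/(N+1))`. -/
theorem stmt_17 (m : ℝ) (hm : 0 < m) (σ : ℝ → ℝ) (hσ : Monotone σ)
    (hσ1 : ∀ x : ℝ, m ≤ x → σ x = 1) (hσ0 : ∀ x : ℝ, x ≤ -m → σ x = 0)
    (ξ : ℝ → ℝ) (hξ : ∀ x : ℝ, ξ x = σ (x + m) - σ (x - m))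
    (a b : ℝ) (hab : a < b) (N : ℕ)
    (x : Fin (N + 2) → ℝ)
    (hx : ∀ k : Fin (N + 2), x k = a + (k : ℕ) * ((b - a) / (N + 1)))
    (Linv : Fin (N + 1) → ℝ → ℝ)
    (hLinv : ∀ (i : Fin (N + 1)) (s : ℝ), Linv i s = (s - x i.castSucc) * (N + 1) + a)
    (α : Fin (N + 1) → ℝ) (hκ : (⨆ i : Fin (N + 1), |α i|) < 1)
    (n : ℕ) (hn : 0 < n)
    (f : ℝ → ℝ) (hf : ContinuousOn f (Set.Icc a b))
    (fα : ℝ → ℝ) (hfαc : ContinuousOn fα (Set.Icc a b))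
    (hself : ∀ i : Fin (N + 1), ∀ s ∈ Set.Icc (x i.castSucc) (x i.succ),
      fα s = α i * fα (Linv i s) + nnOp m ξ f a b (N + 1) s -
        α i * nnOp m ξ f a b n (Linv i s)) :
    ∀ s ∈ Set.Icc a b,
      |fα s - f s| ≤
        (⨆ i : Fin (N + 1), |α i|) / (1 - ⨆ i : Fin (N + 1), |α i|) *
            modulus f a b ((b - a) / n) +
          1 / (1 - ⨆ i : Fin (N + 1), |α i|) * modulus f a b ((b - a) / (N + 1)) := by
  set κ : ℝ := ⨆ i : Fin (N + 1), |α i| with hκ_def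
  have hbdd : BddAbove (Set.range fun i : Fin (N + 1) => |α i|) := Finite.bddAbove_range _
  have hκi : ∀ i : Fin (N + 1), |α i| ≤ κ := fun i => le_ciSup hbdd i
  have hκ0 : 0 ≤ κ := le_trans (abs_nonneg _) (hκi 0)
  have h1κ : 0 < 1 - κ := by linarith
  set hN : ℝ := (b - a) / ((N : ℝ) + 1) with hN_def
  have hN1 : (0 : ℝ) < (N : ℝ) + 1 := by positivity
  have hhN : 0 < hN := div_pos (by linarith) hN1
  set ωn : ℝ := modulus f a b ((b - a) / n) with hωn_def
  set ωN : ℝ := modulus f a b ((b - a) / (N + 1)) with hωN_def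
  have hn0 : (0 : ℝ) < (n : ℝ) := by exact_mod_cast hn
  have hωn0 : 0 ≤ ωn :=
    modulus_nonneg f a b _ hf hab.le (le_of_lt (div_pos (by linarith) hn0))
  have hωN0 : 0 ≤ ωN := modulus_nonneg f a b _ hf hab.le hhN.le
  -- maximum of the error
  obtain ⟨s₀, hs₀, hmax⟩ :=
    (isCompact_Icc (a := a) (b := b)).exists_isMaxOn (Set.nonempty_Icc.mpr hab.le)
      ((hfαc.sub hf).abs)
  set E : ℝ := |fα s₀ - f s₀| with hE_def
  have hmax' : ∀ s ∈ Set.Icc a b, |fα s - f s| ≤ E := fun s hs => hmax hs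
  have hE0 : 0 ≤ E := abs_nonneg _
  -- locate s₀ in a subinterval
  obtain ⟨i, hi1, hi2⟩ : ∃ i : Fin (N + 1), x i.castSucc ≤ s₀ ∧ s₀ ≤ x i.succ := by
    set τ : ℝ := (s₀ - a) / hN with hτ_def
    have hτ0 : 0 ≤ τ := div_nonneg (by linarith [hs₀.1]) hhN.le
    have hNh : ((N : ℝ) + 1) * hN = b - a := by rw [hN_def]; field_simp [hN1.ne']
    have hτN : τ ≤ (N : ℝ) + 1 := by
      rw [hτ_def, div_le_iff₀ hhN]
      nlinarith [hs₀.2]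
    set j : ℕ := min ⌊τ⌋₊ N with hj_def
    have hjN : j ≤ N := min_le_right _ _
    have hτs : τ * hN = s₀ - a := by rw [hτ_def]; field_simp [hhN.ne']
    refine ⟨⟨j, by omega⟩, ?_, ?_⟩
    · have hjτ : (j : ℝ) ≤ τ := by
        calc (j : ℝ) ≤ (⌊τ⌋₊ : ℝ) := by exact_mod_cast min_le_left _ _
          _ ≤ τ := Nat.floor_le hτ0
      have hval : (((⟨j, by omega⟩ : Fin (N + 1)).castSucc : Fin (N + 2)) : ℕ) = j := rfl
      rw [hx, hval]
      have hmul : (j : ℝ) * hN ≤ τ * hN := mul_le_mul_of_nonneg_right hjτ hhN.le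
      linarith
    · have hτj : τ ≤ (j : ℝ) + 1 := by
        rcases le_or_gt ⌊τ⌋₊ N with hc | hc
        · have hje : j = ⌊τ⌋₊ := by omega
          rw [hje]
          exact (Nat.lt_floor_add_one τ).le
        · have hje : j = N := by omega
          rw [hje]; exact hτN
      have hval : (((⟨j, by omega⟩ : Fin (N + 1)).succ : Fin (N + 2)) : ℕ) = j + 1 := rfl
      rw [hx, hval]
      have hmul : τ * hN ≤ ((j : ℝ) + 1) * hN := mul_le_mul_of_nonneg_right hτj hhN.le
      push_cast
      linarith
  -- the image point
  set L : ℝ := Linv i s₀ with hL_def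
  have hxc : x i.castSucc = a + (i : ℝ) * hN := by
    rw [hx]; simp [hN_def]
  have hxs : x i.succ = a + ((i : ℝ) + 1) * hN := by
    rw [hx]; simp [hN_def]
  have hLmem : L ∈ Set.Icc a b := by
    rw [hL_def, hLinv]
    constructor
    · nlinarith [mul_nonneg (sub_nonneg.mpr hi1) hN1.le]
    · have h1 : s₀ - x i.castSucc ≤ hN := by
        rw [hxc]; rw [hxs] at hi2; linarith
      have h2 : (s₀ - x i.castSucc) * ((N : ℝ) + 1) ≤ hN * ((N : ℝ) + 1) :=
        mul_le_mul_of_nonneg_right h1 hN1.le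
      have h3 : hN * ((N : ℝ) + 1) = b - a := by rw [hN_def]; field_simp [hN1.ne']
      linarith
  -- the three error pieces
  have hselfi := hself i s₀ ⟨hi1, hi2⟩
  rw [← hL_def] at hselfi
  have key : fα s₀ - f s₀
      = α i * (fα L - f L) + α i * (f L - nnOp m ξ f a b n L)
        + (nnOp m ξ f a b (N + 1) s₀ - f s₀) := by
    rw [hselfi]; ring
  have e1 : |fα L - f L| ≤ E := hmax' L hLmem
  have e2 : |f L - nnOp m ξ f a b n L| ≤ ωn := by
    have := nnOp_err m hm σ hσ hσ1 hσ0 ξ hξ a b hab f hf n hn L hLmem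
    rwa [hωn_def]
  have e3 : |nnOp m ξ f a b (N + 1) s₀ - f s₀| ≤ ωN := by
    have h := nnOp_err m hm σ hσ hσ1 hσ0 ξ hξ a b hab f hf (N + 1) (by omega) s₀ hs₀
    have hcast : ((N + 1 : ℕ) : ℝ) = (N : ℝ) + 1 := by push_cast; ring
    rw [hcast] at h
    rw [abs_sub_comm, hωN_def]
    exact h
  have hEbound : E ≤ κ * E + κ * ωn + ωN := by
    have h4 : E ≤ |α i * (fα L - f L)| + |α i * (f L - nnOp m ξ f a b n L)|
        + |nnOp m ξ f a b (N + 1) s₀ - f s₀| := by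
      rw [hE_def, key]; exact abs_add_three _ _ _
    have h5 : |α i * (fα L - f L)| ≤ κ * E := by
      rw [abs_mul]
      exact mul_le_mul (hκi i) e1 (abs_nonneg _) hκ0
    have h6 : |α i * (f L - nnOp m ξ f a b n L)| ≤ κ * ωn := by
      rw [abs_mul]
      exact mul_le_mul (hκi i) e2 (abs_nonneg _) hκ0
    linarith
  have hEfin : E ≤ (κ * ωn + ωN) / (1 - κ) := by
    rw [le_div_iff₀ h1κ]
    nlinarith
  intro s hs
  calc |fα s - f s| ≤ E := hmax' s hs
    _ ≤ (κ * ωn + ωN) / (1 - κ) := hEfin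
    _ = κ / (1 - κ) * ωn + 1 / (1 - κ) * ωN := by field_simp
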